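/- For any two compact sets K, M ⊆ ℝ of positive Lebesgue measure, the normed spaces (L^∞(K), ‖·‖_A) and (L^∞(M), ‖·‖_A) are linearly isometric, where ‖f‖_A is the Alexiewicz norm (the sup norm of the primitive). -/

import Mathlib

open MeasureTheory Set

/-- Primitive `J_K f`. -/
noncomputable def JPrim (K : Set ℝ) (f : ℝ → ℝ) (x : ℝ) : ℝ :=
  ∫ y in Set.Icc (sInf K) x ∩ K, f y

/-- The Alexiewicz norm of `f` on `K`: sup norm of the primitive. -/
noncomputable def normA (K : Set ℝ) (f : ℝ → ℝ) : ℝ :=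
  ⨆ x ∈ K, |JPrim K f x|

/-- Membership in `L^∞(K)`. -/
def MemLinf (K : Set ℝ) (f : ℝ → ℝ) : Prop :=
  Measurable f ∧ MeasureTheory.MemLp f ⊤ (volume.restrict K)

noncomputable def cmf (K : Set ℝ) (x : ℝ) : ℝ := (volume (K ∩ Iic x)).toReal

noncomputable def qf (K : Set ℝ) (t : ℝ) : ℝ :=
  sInf {y ∈ K | min t (volume K).toReal ≤ cmf K y}

section basic
variable {K : Set ℝ}

lemma cmf_fin (hK : IsCompact K) (x : ℝ) : volume (K ∩ Iic x) ≠ ⊤ :=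
  ((measure_mono inter_subset_left).trans_lt hK.measure_lt_top).ne

lemma cmf_mono (hK : IsCompact K) : Monotone (cmf K) := fun x x' h =>
  ENNReal.toReal_mono (cmf_fin hK x') (measure_mono (inter_subset_inter_right _ (Iic_subset_Iic.2 h)))

lemma cmf_nonneg (x : ℝ) : 0 ≤ cmf K x := ENNReal.toReal_nonneg

lemma cmf_le (hK : IsCompact K) (x : ℝ) : cmf K x ≤ (volume K).toReal :=
  ENNReal.toReal_mono hK.measure_lt_top.ne (measure_mono inter_subset_left)

lemma cmf_diff (hK : IsCompact K) {x x' : ℝ} (h : x ≤ x') :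
    cmf K x' - cmf K x = (volume (K ∩ Ioc x x')).toReal := by
  have hKm : MeasurableSet K := hK.isClosed.measurableSet
  have hsplit : K ∩ Iic x' = (K ∩ Iic x) ∪ (K ∩ Ioc x x') := by
    rw [← inter_union_distrib_left, Iic_union_Ioc_eq_Iic h]
  have hdisj : Disjoint (K ∩ Iic x) (K ∩ Ioc x x') :=
    (Iic_disjoint_Ioc le_rfl).mono inter_subset_right inter_subset_right
  have := measure_union (μ := volume) hdisj (hKm.inter measurableSet_Ioc)
  rw [← hsplit] at this
  have h1 : volume (K ∩ Iic x) ≠ ⊤ := cmf_fin hK x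
  have h2 : volume (K ∩ Ioc x x') ≠ ⊤ :=
    ((measure_mono inter_subset_left).trans_lt hK.measure_lt_top).ne
  unfold cmf
  rw [this, ENNReal.toReal_add h1 h2]
  ring

lemma cmf_cont (hK : IsCompact K) : Continuous (cmf K) := by
  have : LipschitzWith 1 (cmf K) := by
    apply LipschitzWith.of_dist_le_mul
    intro x y
    wlog h : y ≤ x generalizing x y
    · rw [dist_comm, dist_comm x y]; exact this y x (le_of_not_ge h)
    rw [Real.dist_eq, Real.dist_eq, NNReal.coe_one, one_mul,
      abs_of_nonneg (sub_nonneg.2 (cmf_mono hK h)), abs_of_nonneg (sub_nonneg.2 h),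
      cmf_diff hK h]
    calc (volume (K ∩ Ioc y x)).toReal ≤ (volume (Ioc y x)).toReal :=
          ENNReal.toReal_mono (by simp) (measure_mono inter_subset_right)
      _ = x - y := by rw [Real.volume_Ioc, ENNReal.toReal_ofReal (sub_nonneg.2 h)]
  exact this.continuous

lemma cmf_meas (hK : IsCompact K) : Measurable (cmf K) := (cmf_mono hK).measurable

lemma cmf_eq_zero (hK : IsCompact K) {x : ℝ} (h : x ≤ sInf K) : cmf K x = 0 := by
  have : K ∩ Iic x ⊆ {x} := by
    rintro y ⟨hyK, hyx⟩
    have : sInf K ≤ y := csInf_le hK.bddBelow hyK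
    have hy : y ∈ Iic x := hyx
    exact mem_singleton_iff.2 (le_antisymm hy (h.trans this))
  unfold cmf
  rw [measure_mono_null this Real.volume_singleton, ENNReal.toReal_zero]


lemma inter_Iic_self (hK : IsCompact K) (hne : K.Nonempty) {x : ℝ} (h : sSup K ≤ x) :
    K ∩ Iic x = K :=
  inter_eq_left.2 fun y hy => le_trans (le_csSup hK.bddAbove hy) h

lemma cmf_top (hK : IsCompact K) (hne : K.Nonempty) {x : ℝ} (h : sSup K ≤ x) :
    cmf K x = (volume K).toReal := by
  unfold cmf; rw [inter_Iic_self hK hne h]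

/-- The main pushforward lemma. -/
lemma map_cmf (hK : IsCompact K) (hne : K.Nonempty) (x : ℝ) :
    Measure.map (cmf K) (volume.restrict (K ∩ Iic x)) =
      volume.restrict (Icc 0 (cmf K x)) := by
  have hKm : MeasurableSet K := hK.isClosed.measurableSet
  have hmeas := cmf_meas hK
  haveI : IsFiniteMeasure (volume.restrict (K ∩ Iic x)) :=
    ⟨by rw [Measure.restrict_apply_univ]; exact (cmf_fin hK x).lt_top⟩
  haveI := Measure.isFiniteMeasure_map (volume.restrict (K ∩ Iic x)) (cmf K)
  refine Measure.ext_of_Iic _ _ (fun u => ?_)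
  rw [Measure.map_apply hmeas measurableSet_Iic,
    Measure.restrict_apply (hmeas measurableSet_Iic),
    Measure.restrict_apply measurableSet_Iic]
  have hIcc : Iic u ∩ Icc 0 (cmf K x) = Icc 0 (min (cmf K x) u) := by
    ext y; simp only [mem_inter_iff, mem_Iic, mem_Icc, le_min_iff]; constructor
    · rintro ⟨h1, h2, h3⟩; exact ⟨h2, h3, h1⟩
    · rintro ⟨h1, h2, h3⟩; exact ⟨h3, h1, h2⟩
  rw [hIcc, Real.volume_Icc]
  rcases lt_or_ge u 0 with hu | hu
  · have : cmf K ⁻¹' Iic u = ∅ := by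
      ext y; simp only [mem_preimage, mem_Iic, mem_empty_iff_false, iff_false, not_le]
      exact hu.trans_le (cmf_nonneg y)
    rw [this, empty_inter, measure_empty]
    symm
    rw [ENNReal.ofReal_eq_zero]
    have : min (cmf K x) u ≤ u := min_le_right _ _
    linarith
  rcases le_or_gt (cmf K x) u with hxu | hxu
  · have hsub : K ∩ Iic x ⊆ cmf K ⁻¹' Iic u := fun y hy =>
      mem_preimage.2 (le_trans (cmf_mono hK hy.2) hxu)
    rw [inter_eq_right.2 hsub, min_eq_left hxu, sub_zero]
    exact (ENNReal.ofReal_toReal (cmf_fin hK x)).symm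
  · -- u < cmf K x, with 0 ≤ u
    have hxl : sInf K - 1 ≤ x := by
      by_contra hc
      push_neg at hc
      have := cmf_eq_zero hK (le_of_lt (hc.trans_le (by linarith)))
      have h0 : 0 < cmf K x := lt_of_le_of_lt hu hxu
      rw [this] at h0; exact lt_irrefl _ h0
    obtain ⟨z, hz, hzu⟩ : ∃ z ∈ Icc (sInf K - 1) x, cmf K z = u := by
      have h0 : cmf K (sInf K - 1) = 0 := cmf_eq_zero hK (by linarith)
      have := intermediate_value_Icc hxl ((cmf_cont hK).continuousOn (s := Icc (sInf K - 1) x))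
      exact this ⟨by rw [h0]; exact hu, hxu.le⟩
    rw [min_eq_right hxu.le, sub_zero]
    apply le_antisymm
    · -- upper bound via c = sSup of the preimage
      set A := cmf K ⁻¹' Iic u with hA
      have hAne : A.Nonempty := ⟨z, by simp [hA, hzu]⟩
      have hAbdd : BddAbove A := by
        refine ⟨x, fun y hy => ?_⟩
        by_contra hc; push_neg at hc
        exact absurd (le_trans (cmf_mono hK hc.le) hy) (not_le.2 hxu)
      have hAcl : IsClosed A := isClosed_Iic.preimage (cmf_cont hK)
      set c := sSup A with hc
      have hcA : c ∈ A := hAcl.csSup_mem hAne hAbdd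
      have hsub : cmf K ⁻¹' Iic u ∩ (K ∩ Iic x) ⊆ K ∩ Iic c := fun y hy =>
        ⟨hy.2.1, le_csSup hAbdd hy.1⟩
      calc volume (cmf K ⁻¹' Iic u ∩ (K ∩ Iic x)) ≤ volume (K ∩ Iic c) :=
            measure_mono hsub
        _ = ENNReal.ofReal (cmf K c) := (ENNReal.ofReal_toReal (cmf_fin hK c)).symm
        _ ≤ ENNReal.ofReal u := ENNReal.ofReal_le_ofReal hcA
    · have hsub : K ∩ Iic z ⊆ cmf K ⁻¹' Iic u ∩ (K ∩ Iic x) := by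
        rintro y ⟨hyK, hyz⟩
        exact ⟨mem_preimage.2 (by rw [← hzu]; exact cmf_mono hK hyz),
          hyK, le_trans hyz hz.2⟩
      calc ENNReal.ofReal u = volume (K ∩ Iic z) := by
            rw [← hzu]; exact (ENNReal.ofReal_toReal (cmf_fin hK z))
        _ ≤ _ := measure_mono hsub

lemma qf_set_nonempty (hK : IsCompact K) (hne : K.Nonempty) (t : ℝ) :
    {y ∈ K | min t (volume K).toReal ≤ cmf K y}.Nonempty := by
  refine ⟨sSup K, hK.sSup_mem hne, ?_⟩
  rw [cmf_top hK hne le_rfl]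
  exact min_le_right _ _

lemma qf_mem (hK : IsCompact K) (hne : K.Nonempty) (t : ℝ) :
    qf K t ∈ K ∧ min t (volume K).toReal ≤ cmf K (qf K t) := by
  have hcl : IsClosed {y ∈ K | min t (volume K).toReal ≤ cmf K y} := by
    have : {y ∈ K | min t (volume K).toReal ≤ cmf K y}
        = K ∩ cmf K ⁻¹' Ici (min t (volume K).toReal) := rfl
    rw [this]
    exact hK.isClosed.inter (isClosed_Ici.preimage (cmf_cont hK))
  have hbdd : BddBelow {y ∈ K | min t (volume K).toReal ≤ cmf K y} :=
    hK.bddBelow.mono (sep_subset _ _)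
  exact hcl.csInf_mem (qf_set_nonempty hK hne t) hbdd

lemma qf_mono (hK : IsCompact K) (hne : K.Nonempty) : Monotone (qf K) := by
  intro t t' h
  apply csInf_le_csInf (hK.bddBelow.mono (sep_subset _ _)) (qf_set_nonempty hK hne t')
  rintro y ⟨hyK, hy⟩
  exact ⟨hyK, le_trans (min_le_min_right _ h) hy⟩

lemma qf_meas (hK : IsCompact K) (hne : K.Nonempty) : Measurable (qf K) :=
  (qf_mono hK hne).measurable

lemma qf_le_self (hK : IsCompact K) {y : ℝ} (hy : y ∈ K) : qf K (cmf K y) ≤ y :=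
  csInf_le (hK.bddBelow.mono (sep_subset _ _)) ⟨hy, min_le_left _ _⟩

lemma cmf_qf (hK : IsCompact K) (hne : K.Nonempty) {t : ℝ} (ht0 : 0 ≤ t)
    (htl : t ≤ (volume K).toReal) : cmf K (qf K t) = t := by
  have hmin : min t (volume K).toReal = t := min_eq_left htl
  have hge : t ≤ cmf K (qf K t) := by
    have := (qf_mem hK hne t).2; rwa [hmin] at this
  rcases eq_or_lt_of_le ht0 with h0 | h0
  · -- t = 0 : qf K 0 = sInf K has cmf equal 0
    subst h0
    refine le_antisymm ?_ hge
    have hS : {y ∈ K | min 0 (volume K).toReal ≤ cmf K y} = K := by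
      ext y
      simp only [mem_setOf_eq, and_iff_left_iff_imp]
      intro _
      rw [min_eq_left ENNReal.toReal_nonneg]
      exact cmf_nonneg y
    have hq : qf K 0 = sInf K := by rw [qf, hS]
    rw [hq, cmf_eq_zero hK le_rfl]
  · -- 0 < t
    set A := cmf K ⁻¹' Ici t with hA
    have hAne : A.Nonempty := ⟨sSup K, by
      simp only [hA, mem_preimage, mem_Ici]
      rw [cmf_top hK hne le_rfl]; exact htl⟩
    have hAbdd : BddBelow A := by
      refine ⟨sInf K - 1, fun y hy => ?_⟩
      by_contra hc; push_neg at hc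
      have : cmf K y = 0 := cmf_eq_zero hK (by linarith)
      have : t ≤ (0:ℝ) := by rw [← this]; exact hy
      linarith
    have hAcl : IsClosed A := isClosed_Ici.preimage (cmf_cont hK)
    set p := sInf A with hp
    have hpA : p ∈ A := hAcl.csInf_mem hAne hAbdd
    have hple : cmf K p ≤ t := by
      by_contra hc; push_neg at hc
      have htd : Filter.Tendsto (cmf K) (nhdsWithin p (Iio p)) (nhds (cmf K p)) :=
        ((cmf_cont hK).tendsto p).mono_left nhdsWithin_le_nhds
      have hev : ∀ᶠ y in nhdsWithin p (Iio p), t < cmf K y :=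
        htd.eventually (eventually_gt_nhds hc)
      obtain ⟨y, hy, hylt⟩ := (hev.and self_mem_nhdsWithin).exists
      exact absurd (csInf_le hAbdd (le_of_lt hy : t ≤ cmf K y)) (not_le.2 hylt)
    have hpt : cmf K p = t := le_antisymm hple hpA
    have hpq : p ≤ qf K t := csInf_le hAbdd (by
      rw [hA, mem_preimage, mem_Ici]; exact hge)
    have hsub : K ∩ Ioc p (qf K t) ⊆ {qf K t} := by
      rintro y ⟨hyK, hy1, hy2⟩
      have : y ∈ {y ∈ K | min t (volume K).toReal ≤ cmf K y} := by
        refine ⟨hyK, ?_⟩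
        rw [hmin, ← hpt]
        exact cmf_mono hK hy1.le
      have := csInf_le (hK.bddBelow.mono (sep_subset _ _)) this
      exact le_antisymm hy2 this
    have hdiff := cmf_diff hK hpq
    have : (volume (K ∩ Ioc p (qf K t))).toReal = 0 := by
      rw [measure_mono_null hsub Real.volume_singleton, ENNReal.toReal_zero]
    rw [this] at hdiff
    linarith [hdiff, hpt]

lemma ae_qf_cmf (hK : IsCompact K) (hne : K.Nonempty) :
    ∀ᵐ y ∂(volume.restrict K), qf K (cmf K y) = y := by
  have hKm : MeasurableSet K := hK.isClosed.measurableSet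
  rw [ae_iff, Measure.restrict_apply']
  swap; · exact hKm
  set Sq : ℚ → Set ℝ := fun q => K ∩ Ioi (q : ℝ) ∩ cmf K ⁻¹' Iic (cmf K q) with hSq
  have hnull : ∀ q : ℚ, volume (Sq q) = 0 := by
    intro q
    rcases (Sq q).eq_empty_or_nonempty with he | hne'
    · rw [he, measure_empty]
    have hbdd : BddAbove (Sq q) := hK.bddAbove.mono (fun y hy => hy.1.1)
    set c := sSup (Sq q) with hc
    have hccl : c ∈ closure (Sq q) := csSup_mem_closure hne' hbdd
    have hsub2 : closure (Sq q) ⊆ Ici (q : ℝ) ∩ cmf K ⁻¹' Iic (cmf K q) := by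
      apply closure_minimal
      · rintro y ⟨⟨_, hy2⟩, hy3⟩; exact ⟨mem_Ici.2 (le_of_lt (mem_Ioi.1 hy2)), hy3⟩
      · exact (isClosed_Ici.inter (isClosed_Iic.preimage (cmf_cont hK)))
    have hcq : (q : ℝ) ≤ c := (hsub2 hccl).1
    have hcc : cmf K c ≤ cmf K q := (hsub2 hccl).2
    have hsub : Sq q ⊆ K ∩ Ioc (q : ℝ) c := by
      rintro y ⟨⟨hyK, hy2⟩, hy3⟩
      exact ⟨hyK, hy2, le_csSup hbdd ⟨⟨hyK, hy2⟩, hy3⟩⟩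
    have hd := cmf_diff hK hcq
    have hfin : volume (K ∩ Ioc (q : ℝ) c) ≠ ⊤ :=
      ((measure_mono inter_subset_left).trans_lt hK.measure_lt_top).ne
    have h0 : (volume (K ∩ Ioc (q : ℝ) c)).toReal = 0 := by
      have h1 : cmf K c - cmf K q ≤ 0 := by linarith
      have h2 : 0 ≤ (volume (K ∩ Ioc (q : ℝ) c)).toReal := ENNReal.toReal_nonneg
      linarith [hd]
    have : volume (K ∩ Ioc (q : ℝ) c) = 0 := by
      rwa [ENNReal.toReal_eq_zero_iff, or_iff_left hfin] at h0
    exact measure_mono_null hsub this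
  refine measure_mono_null ?_ (measure_iUnion_null hnull)
  · rintro y ⟨hy, hyK⟩
    simp only [mem_setOf_eq] at hy
    have hle : qf K (cmf K y) ≤ y := qf_le_self hK hyK
    have hlt : qf K (cmf K y) < y := lt_of_le_of_ne hle hy
    obtain ⟨q, hq1, hq2⟩ := exists_rat_btwn hlt
    have h1 : cmf K (qf K (cmf K y)) = cmf K y :=
      cmf_qf hK hne (cmf_nonneg y) (cmf_le hK y)
    have h2 : cmf K (q : ℝ) ≤ cmf K y := cmf_mono hK hq2.le
    have h3 : cmf K y ≤ cmf K (q : ℝ) := by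
      rw [← h1]; exact cmf_mono hK hq1.le
    have hy3 : y ∈ cmf K ⁻¹' Iic (cmf K (q : ℝ)) := by
      simp only [mem_preimage, mem_Iic]
      linarith
    exact mem_iUnion.2 ⟨q, ⟨⟨hyK, hq2⟩, hy3⟩⟩

lemma map_qf (hK : IsCompact K) (hne : K.Nonempty) :
    Measure.map (qf K) (volume.restrict (Icc 0 (volume K).toReal)) =
      volume.restrict K := by
  have h1 := map_cmf hK hne (sSup K)
  rw [inter_Iic_self hK hne le_rfl, cmf_top hK hne le_rfl] at h1
  rw [← h1, Measure.map_map (qf_meas hK hne) (cmf_meas hK)]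
  have : Measure.map (qf K ∘ cmf K) (volume.restrict K) =
      Measure.map id (volume.restrict K) :=
    Measure.map_congr (ae_qf_cmf hK hne)
  rw [this, Measure.map_id]

lemma setIntegral_cmf (hK : IsCompact K) (hne : K.Nonempty) (x : ℝ) {h : ℝ → ℝ}
    (hh : Measurable h) :
    ∫ y in K ∩ Iic x, h (cmf K y) = ∫ t in Icc 0 (cmf K x), h t := by
  rw [← map_cmf hK hne x, integral_map (cmf_meas hK).aemeasurable hh.aestronglyMeasurable]

lemma map_scale {r : ℝ} (hr : 0 < r) (b : ℝ) :
    Measure.map (fun t => r * t) (volume.restrict (Icc 0 b)) =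
      ENNReal.ofReal r⁻¹ • volume.restrict (Icc 0 (r * b)) := by
  have hpre : (fun t => r * t) ⁻¹' (Icc 0 (r * b)) = Icc 0 b := by
    rw [preimage_const_mul_Icc₀ 0 (r * b) hr]
    rw [zero_div, mul_div_cancel_left₀ _ hr.ne']
  calc Measure.map (fun t => r * t) (volume.restrict (Icc 0 b))
      = Measure.map (r * ·) (volume.restrict ((r * ·) ⁻¹' (Icc 0 (r * b)))) := by rw [hpre]
    _ = (Measure.map (r * ·) volume).restrict (Icc 0 (r * b)) :=
        (Measure.restrict_map (measurable_const_mul r) measurableSet_Icc).symm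
    _ = (ENNReal.ofReal |r⁻¹| • volume).restrict (Icc 0 (r * b)) := by
        rw [Real.map_volume_mul_left hr.ne']
    _ = ENNReal.ofReal r⁻¹ • volume.restrict (Icc 0 (r * b)) := by
        rw [abs_of_pos (inv_pos.2 hr), Measure.restrict_smul]

lemma integral_scale {r : ℝ} (hr : 0 < r) (b : ℝ) {h : ℝ → ℝ} (hh : Measurable h) :
    ∫ u in Icc 0 (r * b), h u = r * ∫ t in Icc 0 b, h (r * t) := by
  have h1 : ∫ u, h u ∂(Measure.map (fun t => r * t) (volume.restrict (Icc 0 b)))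
      = ∫ t in Icc 0 b, h (r * t) :=
    integral_map (measurable_const_mul r).aemeasurable hh.aestronglyMeasurable
  rw [map_scale hr b, integral_smul_measure, ENNReal.toReal_ofReal (inv_nonneg.2 hr.le),
    smul_eq_mul] at h1
  rw [← h1]
  field_simp

lemma Icc_inter_eq (hK : IsCompact K) (x : ℝ) : Icc (sInf K) x ∩ K = K ∩ Iic x := by
  ext y; constructor
  · rintro ⟨⟨_, h2⟩, hyK⟩; exact ⟨hyK, h2⟩
  · rintro ⟨hyK, h2⟩; exact ⟨⟨csInf_le hK.bddBelow hyK, h2⟩, hyK⟩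

lemma JPrim_eq (hK : IsCompact K) (hne : K.Nonempty) {f : ℝ → ℝ} (hf : Measurable f) (x : ℝ) :
    JPrim K f x = ∫ u in Icc 0 (cmf K x), f (qf K u) := by
  unfold JPrim
  rw [Icc_inter_eq hK x]
  have hae : ∀ᵐ y ∂(volume.restrict (K ∩ Iic x)), f (qf K (cmf K y)) = f y := by
    have hmono : volume.restrict (K ∩ Iic x) ≤ volume.restrict K :=
      Measure.restrict_mono inter_subset_left le_rfl
    filter_upwards [(ae_qf_cmf hK hne).filter_mono (ae_mono hmono)] with y hy
    rw [hy]
  rw [← setIntegral_cmf hK hne x (h := fun u => f (qf K u)) (hf.comp (qf_meas hK hne))]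
  exact (integral_congr_ae hae).symm

lemma biSup_le_biSup {F G : ℝ → ℝ} {A B : Set ℝ} (hB : B.Nonempty) (C : ℝ)
    (hG : ∀ t ∈ B, |G t| ≤ C)
    (h1 : ∀ x ∈ A, ∃ t ∈ B, G t = F x) :
    (⨆ x ∈ A, |F x|) ≤ ⨆ t ∈ B, |G t| := by
  have hbdd : BddAbove (range fun t => ⨆ _ : t ∈ B, |G t|) := by
    refine ⟨max C 0, ?_⟩
    rintro _ ⟨t, rfl⟩
    exact Real.iSup_le (fun ht => le_max_of_le_left (hG t ht)) (le_max_right _ _)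
  have hle : ∀ t ∈ B, |G t| ≤ ⨆ t ∈ B, |G t| := by
    intro t ht
    calc |G t| ≤ ⨆ _ : t ∈ B, |G t| :=
          le_ciSup (f := fun _ : t ∈ B => |G t|)
            ⟨|G t|, by rintro _ ⟨_, rfl⟩; exact le_rfl⟩ ht
      _ ≤ ⨆ t ∈ B, |G t| := le_ciSup hbdd t
  have h0 : 0 ≤ ⨆ t ∈ B, |G t| := by
    obtain ⟨t, ht⟩ := hB
    exact le_trans (abs_nonneg _) (hle t ht)
  refine Real.iSup_le (fun x => Real.iSup_le (fun hx => ?_) h0) h0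
  obtain ⟨t, ht, hGt⟩ := h1 x hx
  rw [← hGt]
  exact hle t ht

lemma biSup_abs_eq {F G : ℝ → ℝ} {A B : Set ℝ} (hA : A.Nonempty) (hB : B.Nonempty) (C : ℝ)
    (hF : ∀ x ∈ A, |F x| ≤ C) (hG : ∀ t ∈ B, |G t| ≤ C)
    (h1 : ∀ x ∈ A, ∃ t ∈ B, G t = F x) (h2 : ∀ t ∈ B, ∃ x ∈ A, F x = G t) :
    (⨆ x ∈ A, |F x|) = ⨆ t ∈ B, |G t| :=
  le_antisymm (biSup_le_biSup hB C hG h1) (biSup_le_biSup hA C hF (fun t ht => by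
    obtain ⟨x, hx, hxF⟩ := h2 t ht; exact ⟨x, hx, hxF⟩))

lemma exists_ae_bound {μ : Measure ℝ} {f : ℝ → ℝ} (hf : MemLp f ⊤ μ) :
    ∃ C : ℝ, ∀ᵐ y ∂μ, |f y| ≤ C := by
  refine ⟨(eLpNormEssSup f μ).toReal, ?_⟩
  have hlt : eLpNormEssSup f μ < ⊤ := by
    have := hf.2; rwa [eLpNorm_exponent_top] at this
  filter_upwards [ae_le_eLpNormEssSup (f := f) (μ := μ)] with y hy
  have := ENNReal.toReal_mono hlt.ne hy
  rwa [toReal_enorm, Real.norm_eq_abs] at this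

end basic

lemma map_comp_qf {K M : Set ℝ} (hK : IsCompact K) (hKne : K.Nonempty)
    (hM : IsCompact M) (hMne : M.Nonempty) {r : ℝ} (hr : 0 < r)
    (hrl : r * (volume M).toReal = (volume K).toReal) :
    Measure.map (fun y => qf K (r * cmf M y)) (volume.restrict M)
      = ENNReal.ofReal r⁻¹ • volume.restrict K := by
  have h1 : Measure.map (cmf M) (volume.restrict M)
      = volume.restrict (Icc 0 (volume M).toReal) := by
    have := map_cmf hM hMne (sSup M)
    rwa [inter_Iic_self hM hMne le_rfl, cmf_top hM hMne le_rfl] at this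
  calc Measure.map (fun y => qf K (r * cmf M y)) (volume.restrict M)
      = Measure.map (qf K ∘ ((fun t => r * t) ∘ cmf M)) (volume.restrict M) := rfl
    _ = Measure.map (qf K)
        (Measure.map ((fun t => r * t) ∘ cmf M) (volume.restrict M)) :=
        (Measure.map_map (qf_meas hK hKne)
          ((measurable_const_mul r).comp (cmf_meas hM))).symm
    _ = Measure.map (qf K) (Measure.map (fun t => r * t)
        (Measure.map (cmf M) (volume.restrict M))) := by
        rw [Measure.map_map (measurable_const_mul r) (cmf_meas hM)]
    _ = Measure.map (qf K)
        (ENNReal.ofReal r⁻¹ • volume.restrict (Icc 0 ((volume K).toReal))) := by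
        rw [h1, map_scale hr, hrl]
    _ = ENNReal.ofReal r⁻¹ • volume.restrict K := by
        rw [Measure.map_smul, map_qf hK hKne]

lemma memLinf_comp {K M : Set ℝ} (hK : IsCompact K) (hKne : K.Nonempty)
    (hM : IsCompact M) (hMne : M.Nonempty) {r : ℝ} (hr : 0 < r)
    (hrl : r * (volume M).toReal = (volume K).toReal)
    {f : ℝ → ℝ} (hf : MemLinf K f) (c : ℝ) :
    MemLinf M (fun y => c * f (qf K (r * cmf M y))) := by
  obtain ⟨hfm, hfl⟩ := hf
  have hφ : Measurable (fun y => qf K (r * cmf M y)) :=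
    (qf_meas hK hKne).comp ((cmf_meas hM).const_mul r)
  have hmap := map_comp_qf hK hKne hM hMne hr hrl
  obtain ⟨C, hC⟩ := exists_ae_bound hfl
  refine ⟨measurable_const.mul (hfm.comp hφ), ?_⟩
  apply memLp_top_of_bound
    ((measurable_const.mul (hfm.comp hφ)).aestronglyMeasurable) (|c| * C)
  have hBm : MeasurableSet {z : ℝ | ¬ |f z| ≤ C} :=
    (measurableSet_le hfm.abs measurable_const).compl
  have hB0 : volume.restrict K {z | ¬ |f z| ≤ C} = 0 := by
    rw [← ae_iff]; exact hC
  have hpre : volume.restrict M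
      ((fun y => qf K (r * cmf M y)) ⁻¹' {z | ¬ |f z| ≤ C}) = 0 := by
    have hma := Measure.map_apply (μ := volume.restrict M) hφ hBm
    rw [hmap, Measure.smul_apply, hB0, smul_zero] at hma
    exact hma.symm
  have hae : ∀ᵐ y ∂(volume.restrict M), |f (qf K (r * cmf M y))| ≤ C := by
    rw [ae_iff]
    exact hpre
  filter_upwards [hae] with y hy
  rw [Real.norm_eq_abs]
  show |c * f (qf K (r * cmf M y))| ≤ |c| * C
  rw [abs_mul]
  exact mul_le_mul_of_nonneg_left hy (abs_nonneg c)

lemma JPrim_T {K M : Set ℝ} (hK : IsCompact K) (hKne : K.Nonempty)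
    (hM : IsCompact M) (hMne : M.Nonempty) {r : ℝ} (hr : 0 < r)
    {f : ℝ → ℝ} (hfm : Measurable f) (y : ℝ) :
    JPrim M (fun z => r * f (qf K (r * cmf M z))) y
      = ∫ u in Icc 0 (r * cmf M y), f (qf K u) := by
  have hφ : Measurable (fun z => r * f (qf K (r * cmf M z))) :=
    measurable_const.mul (hfm.comp ((qf_meas hK hKne).comp ((cmf_meas hM).const_mul r)))
  rw [JPrim_eq hM hMne hφ y]
  have hcongr : EqOn (fun u => r * f (qf K (r * cmf M (qf M u))))
      (fun u => r * f (qf K (r * u))) (Icc 0 (cmf M y)) := by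
    intro u hu
    simp only
    rw [cmf_qf hM hMne hu.1 (le_trans hu.2 (cmf_le hM y))]
  rw [setIntegral_congr_fun measurableSet_Icc hcongr]
  rw [integral_scale hr (cmf M y) (h := fun u => f (qf K u)) (hfm.comp (qf_meas hK hKne))]
  rw [integral_const_mul]

theorem stmt15 (K M : Set ℝ) (hK : IsCompact K) (hM : IsCompact M)
    (hKpos : 0 < volume K) (hMpos : 0 < volume M) :
    ∃ T : (ℝ → ℝ) → (ℝ → ℝ),
      -- T maps L^∞(K) into L^∞(M)
      (∀ f, MemLinf K f → MemLinf M (T f)) ∧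
      -- linearity
      (∀ f g, MemLinf K f → MemLinf K g →
        (∀ᵐ y ∂(volume.restrict M), T (f + g) y = T f y + T g y) ∧
        ∀ c : ℝ, ∀ᵐ y ∂(volume.restrict M), T (c • f) y = c * T f y) ∧
      -- isometry for the Alexiewicz norms
      (∀ f, MemLinf K f → normA M (T f) = normA K f) ∧
      -- surjectivity onto L^∞(M) (up to a.e. equality)
      (∀ g, MemLinf M g → ∃ f, MemLinf K f ∧ T f =ᵐ[volume.restrict M] g) := by
  have hKne : K.Nonempty := by
    rw [nonempty_iff_ne_empty]; rintro rfl; simp at hKpos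
  have hMne : M.Nonempty := by
    rw [nonempty_iff_ne_empty]; rintro rfl; simp at hMpos
  have hlK : 0 < (volume K).toReal := ENNReal.toReal_pos hKpos.ne' hK.measure_lt_top.ne
  have hlM : 0 < (volume M).toReal := ENNReal.toReal_pos hMpos.ne' hM.measure_lt_top.ne
  set r : ℝ := (volume K).toReal / (volume M).toReal with hrdef
  have hr : 0 < r := div_pos hlK hlM
  have hrl : r * (volume M).toReal = (volume K).toReal := div_mul_cancel₀ _ hlM.ne'
  have hrl' : r⁻¹ * (volume K).toReal = (volume M).toReal := by
    field_simp [hrdef]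
    linarith [hrl]
  refine ⟨fun f y => r * f (qf K (r * cmf M y)), ?_, ?_, ?_, ?_⟩
  · intro f hf
    exact memLinf_comp hK hKne hM hMne hr hrl hf r
  · intro f g _ _
    constructor
    · filter_upwards with y
      simp only [Pi.add_apply]
      ring
    · intro c
      filter_upwards with y
      simp only [Pi.smul_apply, smul_eq_mul]
      ring
  · -- isometry
    intro f hf
    haveI : IsFiniteMeasure (volume.restrict K) :=
      ⟨by rw [Measure.restrict_apply_univ]; exact hK.measure_lt_top⟩
    have hint : Integrable f (volume.restrict K) := hf.2.integrable le_top
    set C : ℝ := ∫ y in K, |f y| with hC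
    set H : ℝ → ℝ := fun s => ∫ u in Icc 0 s, f (qf K u) with hH
    have hJb : ∀ x, |JPrim K f x| ≤ C := by
      intro x
      have h1 : |JPrim K f x| ≤ ∫ y in Icc (sInf K) x ∩ K, |f y| := by
        rw [← Real.norm_eq_abs (JPrim K f x)]
        refine (norm_integral_le_integral_norm _).trans_eq ?_
        simp [Real.norm_eq_abs]
      refine h1.trans ?_
      refine setIntegral_mono_set hint.abs
        (Filter.Eventually.of_forall fun y => abs_nonneg _) ?_
      exact HasSubset.Subset.eventuallyLE (by rw [Icc_inter_eq hK x]; exact inter_subset_left)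
    have hIccne : (Icc (0:ℝ) (volume K).toReal).Nonempty := ⟨0, le_rfl, hlK.le⟩
    have hHJ : ∀ t ∈ Icc (0:ℝ) (volume K).toReal, H t = JPrim K f (qf K t) := by
      intro t ht
      rw [JPrim_eq hK hKne hf.1, cmf_qf hK hKne ht.1 ht.2]
    have hHb : ∀ t ∈ Icc (0:ℝ) (volume K).toReal, |H t| ≤ C := by
      intro t ht; rw [hHJ t ht]; exact hJb _
    have hTval : ∀ y, JPrim M (fun z => r * f (qf K (r * cmf M z))) y = H (r * cmf M y) :=
      fun y => JPrim_T hK hKne hM hMne hr hf.1 y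
    have hmem : ∀ y, r * cmf M y ∈ Icc (0:ℝ) (volume K).toReal := by
      intro y
      constructor
      · exact mul_nonneg hr.le (cmf_nonneg y)
      · calc r * cmf M y ≤ r * (volume M).toReal :=
              mul_le_mul_of_nonneg_left (cmf_le hM y) hr.le
          _ = (volume K).toReal := hrl
    have e1 : (⨆ x ∈ K, |JPrim K f x|)
        = ⨆ t ∈ Icc (0:ℝ) (volume K).toReal, |H t| := by
      refine biSup_abs_eq hKne hIccne C (fun x _ => hJb x) hHb ?_ ?_
      · intro x hx
        refine ⟨cmf K x, ⟨cmf_nonneg x, cmf_le hK x⟩, ?_⟩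
        exact (JPrim_eq hK hKne hf.1 x).symm
      · intro t ht
        exact ⟨qf K t, (qf_mem hK hKne t).1, (hHJ t ht).symm⟩
    have e2 : (⨆ y ∈ M, |JPrim M (fun z => r * f (qf K (r * cmf M z))) y|)
        = ⨆ t ∈ Icc (0:ℝ) (volume K).toReal, |H t| := by
      refine biSup_abs_eq hMne hIccne C ?_ hHb ?_ ?_
      · intro y _
        rw [hTval y]
        exact hHb _ (hmem y)
      · intro y _
        exact ⟨r * cmf M y, hmem y, (hTval y).symm⟩
      · intro t ht
        refine ⟨qf M (t / r), (qf_mem hM hMne (t / r)).1, ?_⟩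
        rw [hTval, cmf_qf hM hMne (div_nonneg ht.1 hr.le)
          ((div_le_iff₀ hr).mpr (by rw [mul_comm, hrl]; exact ht.2)),
          mul_div_cancel₀ _ hr.ne']
    show (⨆ y ∈ M, |JPrim M (fun z => r * f (qf K (r * cmf M z))) y|)
        = ⨆ x ∈ K, |JPrim K f x|
    rw [e1, e2]
  · -- surjectivity
    intro g hg
    refine ⟨fun x => r⁻¹ * g (qf M (r⁻¹ * cmf K x)), ?_, ?_⟩
    · exact memLinf_comp hM hMne hK hKne (inv_pos.2 hr) hrl' hg r⁻¹
    · filter_upwards [ae_qf_cmf hM hMne] with y hy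
      show r * (r⁻¹ * g (qf M (r⁻¹ * cmf K (qf K (r * cmf M y))))) = g y
      rw [cmf_qf hK hKne (mul_nonneg hr.le (cmf_nonneg y)) (by
        calc r * cmf M y ≤ r * (volume M).toReal :=
              mul_le_mul_of_nonneg_left (cmf_le hM y) hr.le
          _ = (volume K).toReal := hrl)]
      rw [inv_mul_cancel_left₀ hr.ne', hy, mul_inv_cancel_left₀ hr.ne']
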